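/- For every complex number v with |v| ≤ 1, the series (1/2) ∑_{m=1}^∞ (m!)^2 4^m v^{2m} / ((2m)! m^2) converges absolutely and equals arcsin(v)^2. -/

import Mathlib

open Complex Metric Set

/-- The principal branch of the complex arcsine. -/
noncomputable def carcsin (z : ℂ) : ℂ :=
  -Complex.I * Complex.log (Complex.I * z + (1 - z ^ 2) ^ ((1 : ℂ) / 2))

noncomputable def dc (m : ℕ) : ℝ :=
  ((Nat.factorial (m+1) : ℝ))^2 * 4^(m+1) /
    ((Nat.factorial (2*(m+1)) : ℝ) * 2 * ((m:ℝ)+1)^2)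

lemma dc_pos (m : ℕ) : 0 < dc m := by
  apply div_pos <;> positivity

lemma dc_rec (m : ℕ) :
    dc (m+1) * ((2*(m:ℝ)+4)*(2*(m:ℝ)+3)) = dc m * (2*(m:ℝ)+2)^2 := by
  unfold dc
  have h1 : Nat.factorial (m+1+1) = (m+2) * Nat.factorial (m+1) := rfl
  have h2 : 2*(m+1+1) = (2*(m+1)+1)+1 := by ring
  have h3 : Nat.factorial (2*(m+1)+1+1)
      = (2*(m+1)+2) * ((2*(m+1)+1) * Nat.factorial (2*(m+1))) := by
    rw [Nat.factorial_succ, Nat.factorial_succ]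
  rw [h1, h2, h3]
  have f1 : ((Nat.factorial (m+1) : ℝ)) ≠ 0 := Nat.cast_ne_zero.2 (Nat.factorial_ne_zero _)
  have f2 : ((Nat.factorial (2*(m+1)) : ℝ)) ≠ 0 := Nat.cast_ne_zero.2 (Nat.factorial_ne_zero _)
  have f3 : ((m:ℝ)+1) ≠ 0 := by positivity
  have f4 : ((m:ℝ)+2) ≠ 0 := by positivity
  push_cast
  generalize ((Nat.factorial (m+1) : ℝ)) = a at *
  generalize ((Nat.factorial (2*(m+1)) : ℝ)) = b at *
  field_simp
  ring

noncomputable def Aq (m : ℕ) : ℝ :=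
  ((Nat.factorial m : ℝ))^2 * 4^m / (Nat.factorial (2*m) : ℝ)

lemma Aq_pos (m : ℕ) : 0 < Aq m := by unfold Aq; positivity

lemma Aq_rec (m : ℕ) : Aq (m+1) * (2*(m:ℝ)+1) = Aq m * (2*(m:ℝ)+2) := by
  unfold Aq
  have h2 : 2*(m+1) = (2*m+1)+1 := by ring
  rw [Nat.factorial_succ, h2, Nat.factorial_succ, Nat.factorial_succ]
  have f1 : ((Nat.factorial m : ℝ)) ≠ 0 := Nat.cast_ne_zero.2 (Nat.factorial_ne_zero _)
  have f2 : ((Nat.factorial (2*m) : ℝ)) ≠ 0 := Nat.cast_ne_zero.2 (Nat.factorial_ne_zero _)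
  push_cast
  generalize ((Nat.factorial m : ℝ)) = a at *
  generalize ((Nat.factorial (2*m) : ℝ)) = b at *
  field_simp
  ring

lemma Aq_sq_le (m : ℕ) : Aq (m+1) ^ 2 ≤ 4*((m:ℝ)+1) := by
  induction m with
  | zero =>
    have : Aq (0+1) * (2*((0:ℕ):ℝ)+1) = Aq 0 * (2*((0:ℕ):ℝ)+2) := Aq_rec 0
    have h0 : Aq 0 = 1 := by unfold Aq; norm_num [Nat.factorial]
    rw [h0] at this
    norm_num at this ⊢
    rw [this]; norm_num
  | succ n ih =>
    have hr := Aq_rec (n+1)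
    have hp : (0:ℝ) < 2*(n:ℝ)+3 := by positivity
    have hA : Aq (n+2) = Aq (n+1) * (2*(n:ℝ)+4) / (2*(n:ℝ)+3) := by
      field_simp at hr ⊢
      push_cast at hr ⊢
      linarith [hr]
    rw [hA]
    rw [div_pow, div_le_iff₀ (by positivity)]
    have h1 := Aq_pos (n+1)
    push_cast
    nlinarith [ih, sq_nonneg ((n:ℝ)+1)]


lemma dc_eq_Aq (m : ℕ) : dc m = Aq (m+1) / (2 * ((m:ℝ)+1)^2) := by
  unfold dc Aq
  have f1 : ((Nat.factorial (2*(m+1)) : ℝ)) ≠ 0 := Nat.cast_ne_zero.2 (Nat.factorial_ne_zero _)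
  have f3 : ((m:ℝ)+1) ≠ 0 := by positivity
  field_simp

lemma dc_le (m : ℕ) : dc m ≤ ((m:ℝ)+1) ^ (-(3/2) : ℝ) := by
  have hm : (0:ℝ) < (m:ℝ)+1 := by positivity
  have h1 : Aq (m+1) ≤ 2 * Real.sqrt ((m:ℝ)+1) := by
    have := Aq_sq_le m
    nlinarith [Aq_pos (m+1), Real.sq_sqrt hm.le, Real.sqrt_nonneg ((m:ℝ)+1),
      sq_nonneg (Aq (m+1) - 2 * Real.sqrt ((m:ℝ)+1))]
  rw [dc_eq_Aq]
  have h2 : ((m:ℝ)+1) ^ (-(3/2) : ℝ) = Real.sqrt ((m:ℝ)+1) / ((m:ℝ)+1)^2 := by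
    rw [Real.sqrt_eq_rpow, eq_div_iff (by positivity), ← Real.rpow_natCast (((m:ℝ)+1)) 2,
      ← Real.rpow_add hm]
    norm_num
  rw [h2, div_le_div_iff₀ (by positivity) (by positivity)]
  nlinarith [Real.sqrt_nonneg ((m:ℝ)+1)]

lemma dc_le_one (m : ℕ) : dc m ≤ 1 := by
  refine (dc_le m).trans ?_
  have : ((m:ℝ)+1) ^ (-(3/2) : ℝ) ≤ ((m:ℝ)+1) ^ (0 : ℝ) := by
    apply Real.rpow_le_rpow_of_exponent_le (by push_cast; linarith [Nat.cast_nonneg (α := ℝ) m])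
    norm_num
  simpa using this

lemma dc_summable : Summable dc := by
  have h : Summable (fun m : ℕ => ((m:ℝ)+1) ^ (-(3/2) : ℝ)) := by
    have h0 : Summable (fun n : ℕ => (((n:ℝ)) ^ (3/2 : ℝ))⁻¹) :=
      Real.summable_nat_rpow_inv.mpr (by norm_num)
    have h1 := (summable_nat_add_iff 1).mpr h0
    refine h1.congr fun m => ?_
    rw [← Real.rpow_neg (by positivity)]
    push_cast
    ring_nf
  exact h.of_nonneg_of_le (fun m => (dc_pos m).le) dc_le

lemma summable_geom_poly (k : ℕ) {r : ℝ} (h0 : 0 ≤ r) (h1 : r < 1) :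
    Summable (fun m : ℕ => ((m:ℝ)+1)^k * r^m) := by
  have hs : Summable (fun n : ℕ => (2:ℝ)^k * ((n:ℝ)^k * r^n)) :=
    (summable_pow_mul_geometric_of_norm_lt_one (R := ℝ) k
      (by rwa [Real.norm_eq_abs, _root_.abs_of_nonneg h0])).mul_left _
  apply Summable.of_norm_bounded_eventually_nat hs
  filter_upwards [Filter.eventually_ge_atTop 1] with m hm
  rw [Real.norm_eq_abs, _root_.abs_of_nonneg (by positivity)]
  have h2 : ((m:ℝ)+1)^k ≤ (2:ℝ)^k * (m:ℝ)^k := by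
    rw [← mul_pow]
    apply pow_le_pow_left₀ (by positivity)
    have : (1:ℝ) ≤ (m:ℝ) := by exact_mod_cast hm
    linarith
  have := pow_nonneg h0 m
  nlinarith [pow_nonneg (by positivity : (0:ℝ) ≤ (m:ℝ)+1) k]

lemma summable_aux {z : ℂ} (hz : ‖z‖ < 1) (c : ℕ → ℝ) (k : ℕ)
    (hc : ∀ m, |c m| ≤ 4^k*((m:ℝ)+1)^k) (p : ℕ → ℕ) (hp : ∀ m, m ≤ p m) :
    Summable (fun m => (c m : ℂ) * z^(p m)) := by
  refine Summable.of_norm_bounded (g := fun m => 4^k * (((m:ℝ)+1)^k * ‖z‖^m))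
    ((summable_geom_poly k (norm_nonneg z) hz).mul_left _) ?_
  intro m
  rw [norm_mul, Complex.norm_real, norm_pow]
  have h1 : ‖z‖^(p m) ≤ ‖z‖^m := pow_le_pow_of_le_one (norm_nonneg z) hz.le (hp m)
  have h2 := hc m
  have h4 : (0:ℝ) ≤ ‖z‖^(p m) := by positivity
  calc |c m| * ‖z‖^(p m) ≤ (4^k*((m:ℝ)+1)^k) * ‖z‖^m := by
        apply mul_le_mul h2 h1 h4 (by positivity)
    _ = 4^k * (((m:ℝ)+1)^k * ‖z‖^m) := by ring

noncomputable def cs (z : ℂ) : ℂ := (1 - z^2) ^ ((1:ℂ)/2)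
noncomputable def cw (z : ℂ) : ℂ := Complex.I * z + cs z
noncomputable def S (z : ℂ) : ℂ := ∑' m : ℕ, ((dc m : ℝ) : ℂ) * z^(2*m+2)
noncomputable def S1 (z : ℂ) : ℂ := ∑' m : ℕ, ((dc m * (2*(m:ℝ)+2) : ℝ) : ℂ) * z^(2*m+1)
noncomputable def S2 (z : ℂ) : ℂ :=
  ∑' m : ℕ, ((dc m * ((2*(m:ℝ)+2)*(2*(m:ℝ)+1)) : ℝ) : ℂ) * z^(2*m)

lemma sq_cs (z : ℂ) : cs z ^ 2 = 1 - z^2 := by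
  unfold cs
  rcases eq_or_ne (1 - z^2) 0 with h | h
  · rw [h, Complex.zero_cpow (by norm_num)]; ring
  · rw [sq, ← Complex.cpow_add _ _ h]
    norm_num

lemma cw_mul (z : ℂ) : cw z * (cs z - Complex.I * z) = 1 := by
  have h := sq_cs z
  unfold cw
  have : (Complex.I * z + cs z) * (cs z - Complex.I * z) = cs z ^2 - (Complex.I)^2 * z^2 := by ring
  rw [this, h, Complex.I_sq]; ring

lemma cw_ne_zero (z : ℂ) : cw z ≠ 0 := left_ne_zero_of_mul_eq_one (cw_mul z)

lemma base_mem {z : ℂ} (hz : ‖z‖ ≤ 1) (hz2 : z^2 ≠ 1) : (1 - z^2) ∈ slitPlane := by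
  rw [Complex.mem_slitPlane_iff]
  by_contra h
  push_neg at h
  obtain ⟨h1, h2⟩ := h
  have hn : z.re^2 + z.im^2 ≤ 1 := by
    have : ‖z‖^2 ≤ 1 := by nlinarith [norm_nonneg z]
    rw [Complex.sq_norm, Complex.normSq_apply] at this
    nlinarith
  rw [show (1 - z^2) = 1 - z*z by ring] at h1 h2
  simp only [Complex.sub_re, Complex.sub_im, Complex.one_re, Complex.one_im,
    Complex.mul_re, Complex.mul_im] at h1 h2
  have hb : z.im = 0 := by nlinarith
  apply hz2
  apply Complex.ext <;>
    simp only [show z^2 = z*z from sq z, Complex.mul_re, Complex.mul_im,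
      Complex.one_re, Complex.one_im] <;> nlinarith

lemma s_re_pos {x : ℂ} (hx : x ∈ slitPlane) : 0 < (x ^ ((1:ℂ)/2)).re := by
  have hx0 : x ≠ 0 := Complex.slitPlane_ne_zero hx
  rw [Complex.cpow_def_of_ne_zero hx0, Complex.exp_re]
  have harg : |x.arg| < Real.pi := by
    rcases (Complex.mem_slitPlane_iff_arg.mp hx) with ⟨h1, -⟩
    rcases lt_or_eq_of_le (Complex.abs_arg_le_pi x) with h | h
    · exact h
    · rw [abs_eq Real.pi_pos.le] at h
      rcases h with h | h
      · exact absurd h h1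
      · have := Complex.neg_pi_lt_arg x
        rw [h] at this; linarith
  have him : (Complex.log x * (1/2)).im = x.arg / 2 := by
    simp [Complex.mul_im, Complex.log_im]
    ring
  rw [him]
  have : Real.cos (x.arg / 2) > 0 := by
    apply Real.cos_pos_of_mem_Ioo
    constructor <;> [linarith [abs_lt.mp harg]; linarith [abs_lt.mp harg]]
  positivity

lemma cw_inv (z : ℂ) : (cw z)⁻¹ = cs z - Complex.I * z :=
  inv_eq_of_mul_eq_one_right (cw_mul z)

lemma cw_mem {z : ℂ} (hz : ‖z‖ ≤ 1) : cw z ∈ slitPlane := by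
  rcases eq_or_ne (z^2) 1 with h | h
  · -- z = ±1, cs z = 0, cw z = ± I
    have hcs : cs z = 0 := by
      unfold cs
      rw [show (1:ℂ) - z^2 = 0 by rw [h]; ring]
      exact Complex.zero_cpow (by norm_num)
    have hz1 : z = 1 ∨ z = -1 := by
      have : (z - 1) * (z + 1) = 0 := by rw [show (z-1)*(z+1) = z^2 - 1 by ring, h]; ring
      rcases mul_eq_zero.mp this with h' | h'
      · left; linear_combination h'
      · right; linear_combination h'
    rw [Complex.mem_slitPlane_iff]
    right
    unfold cw
    rw [hcs]
    rcases hz1 with rfl | rfl <;> simp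
  · have hb := base_mem hz h
    have hs := s_re_pos hb
    rw [Complex.mem_slitPlane_iff]
    by_contra hc
    push_neg at hc
    obtain ⟨h1, h2⟩ := hc
    -- cw z is a nonpositive real; its inverse has nonpositive re; sum has re 2*(cs z).re > 0
    have hinv : ((cw z)⁻¹).re ≤ 0 := by
      rw [Complex.inv_re]
      have : Complex.normSq (cw z) > 0 := Complex.normSq_pos.mpr (cw_ne_zero z)
      apply div_nonpos_of_nonpos_of_nonneg h1 this.le
    have hsum : (cw z + (cw z)⁻¹).re = 2 * (cs z).re := by
      rw [cw_inv]
      unfold cw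
      simp [Complex.add_re, Complex.sub_re]
      ring
    have : (cw z + (cw z)⁻¹).re ≤ 0 := by rw [Complex.add_re]; linarith
    rw [hsum] at this
    have : 0 < (cs z).re := by unfold cs; exact hs
    linarith

lemma carcsin_eq (z : ℂ) : carcsin z = -Complex.I * Complex.log (cw z) := rfl

lemma sq_ne_one {z : ℂ} (hz : ‖z‖ < 1) : z^2 ≠ 1 := by
  intro h
  have : ‖z^2‖ = 1 := by rw [h, norm_one]
  rw [norm_pow] at this
  nlinarith [norm_nonneg z]

lemma cs_ne_zero {z : ℂ} (hz : ‖z‖ < 1) : cs z ≠ 0 := by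
  intro h
  have := sq_cs z
  rw [h] at this
  exact sq_ne_one hz (by linear_combination this)

lemma hasDerivAt_cs {z : ℂ} (hz : ‖z‖ < 1) : HasDerivAt cs (-z / cs z) z := by
  have hb : (1 - z^2) ∈ slitPlane := base_mem hz.le (sq_ne_one hz)
  have h1 : HasDerivAt (fun z : ℂ => 1 - z^2) (-(2*z)) z := by
    simpa using ((hasDerivAt_pow 2 z).const_sub 1)
  have h2 := (HasDerivAt.cpow_const h1 hb : HasDerivAt (fun y : ℂ => (1 - y^2) ^ ((1:ℂ)/2))
    (((1:ℂ)/2) * (1 - z^2) ^ ((1:ℂ)/2 - 1) * (-(2*z))) z)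
  convert h2 using 1
  · rfl
  have hb0 : (1 - z^2) ≠ 0 := Complex.slitPlane_ne_zero hb
  have : ((1:ℂ)/2 - 1) = -(1/2) := by ring
  rw [this, Complex.cpow_neg]
  have hcs := cs_ne_zero hz
  unfold cs at hcs ⊢
  field_simp

lemma hasDerivAt_carcsin {z : ℂ} (hz : ‖z‖ < 1) : HasDerivAt carcsin (1 / cs z) z := by
  have hcs := cs_ne_zero hz
  have hwz := cw_ne_zero z
  have hw : HasDerivAt cw (Complex.I * cw z / cs z) z := by
    have h0 : HasDerivAt cw (Complex.I + -z / cs z) z := by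
      exact (((hasDerivAt_id z).const_mul Complex.I).add (hasDerivAt_cs hz)).congr_deriv (by simp)
    convert h0 using 1
    field_simp
    unfold cw
    linear_combination z * Complex.I_sq
  have hlog := hw.clog (cw_mem hz.le)
  have := hlog.const_mul (-Complex.I)
  refine this.congr_deriv (Eq.symm ?_)
  field_simp
  linear_combination Complex.I_sq

lemma carcsin_zero : carcsin 0 = 0 := by
  unfold carcsin
  norm_num [Complex.one_cpow]

lemma hasDerivAt_S {z : ℂ} (hz : ‖z‖ < 1) : HasDerivAt S (S1 z) z := by
  set r : ℝ := (‖z‖ + 1)/2 with hr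
  have hr0 : 0 < r := by positivity
  have hr1 : r < 1 := by rw [hr]; linarith
  have hzr : z ∈ ball (0:ℂ) r := by
    rw [mem_ball_zero_iff]; rw [hr]; linarith
  have key := hasDerivAt_tsum_of_isPreconnected
    (u := fun m : ℕ => 4*(((m:ℝ)+1)^1 * r^m))
    (g := fun (m : ℕ) (y : ℂ) => ((dc m : ℝ) : ℂ) * y^(2*m+2))
    (g' := fun (m : ℕ) (y : ℂ) => ((dc m * (2*(m:ℝ)+2) : ℝ) : ℂ) * y^(2*m+1))
    ((summable_geom_poly 1 hr0.le hr1).mul_left 4) isOpen_ball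
    (convex_ball (0:ℂ) r).isPreconnected
    (fun m y _ => by
      have h := (hasDerivAt_pow (2*m+2) y).const_mul ((dc m : ℝ) : ℂ)
      refine h.congr_deriv (Eq.symm ?_)
      push_cast
      ring_nf)
    (fun m y hy => by
      rw [mem_ball_zero_iff] at hy
      rw [norm_mul, Complex.norm_real, norm_pow]
      have h1 : ‖y‖^(2*m+1) ≤ r^m := by
        calc ‖y‖^(2*m+1) ≤ r^(2*m+1) :=
              pow_le_pow_left₀ (norm_nonneg y) hy.le _
          _ ≤ r^m := pow_le_pow_of_le_one hr0.le hr1.le (by omega)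
      have h2 : |dc m * (2*(m:ℝ)+2)| ≤ 4*((m:ℝ)+1) := by
        have hd := dc_pos m
        have hd1 := dc_le_one m
        rw [_root_.abs_of_nonneg (by nlinarith [Nat.cast_nonneg (α := ℝ) m] : (0:ℝ) ≤ dc m * (2*(m:ℝ)+2))]
        nlinarith [dc_le_one m, dc_pos m, Nat.cast_nonneg (α := ℝ) m]
      calc |dc m * (2*(m:ℝ)+2)| * ‖y‖^(2*m+1) ≤ (4*((m:ℝ)+1)) * r^m := by
            apply mul_le_mul h2 h1 (by positivity) (by positivity)
        _ = 4*(((m:ℝ)+1)^1 * r^m) := by ring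
    )
    (mem_ball_self hr0)
    (by
      apply summable_zero.congr
      intro m
      simp)
    hzr
  exact key

lemma hasDerivAt_S1 {z : ℂ} (hz : ‖z‖ < 1) : HasDerivAt S1 (S2 z) z := by
  set r : ℝ := (‖z‖ + 1)/2 with hr
  have hr0 : 0 < r := by positivity
  have hr1 : r < 1 := by rw [hr]; linarith
  have hzr : z ∈ ball (0:ℂ) r := by
    rw [mem_ball_zero_iff]; rw [hr]; linarith
  have key := hasDerivAt_tsum_of_isPreconnected
    (u := fun m : ℕ => 16*(((m:ℝ)+1)^2 * r^m))
    (g := fun (m : ℕ) (y : ℂ) => ((dc m * (2*(m:ℝ)+2) : ℝ) : ℂ) * y^(2*m+1))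
    (g' := fun (m : ℕ) (y : ℂ) =>
      ((dc m * ((2*(m:ℝ)+2)*(2*(m:ℝ)+1)) : ℝ) : ℂ) * y^(2*m))
    ((summable_geom_poly 2 hr0.le hr1).mul_left 16) isOpen_ball
    (convex_ball (0:ℂ) r).isPreconnected
    (fun m y _ => by
      have h := (hasDerivAt_pow (2*m+1) y).const_mul ((dc m * (2*(m:ℝ)+2) : ℝ) : ℂ)
      refine h.congr_deriv (Eq.symm ?_)
      push_cast
      ring_nf)
    (fun m y hy => by
      rw [mem_ball_zero_iff] at hy
      rw [norm_mul, Complex.norm_real, norm_pow]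
      have h1 : ‖y‖^(2*m) ≤ r^m := by
        calc ‖y‖^(2*m) ≤ r^(2*m) := pow_le_pow_left₀ (norm_nonneg y) hy.le _
          _ ≤ r^m := pow_le_pow_of_le_one hr0.le hr1.le (by omega)
      have hd := dc_pos m
      have hd1 := dc_le_one m
      have hmn : (0:ℝ) ≤ (m:ℝ) := Nat.cast_nonneg m
      have h2 : |dc m * ((2*(m:ℝ)+2)*(2*(m:ℝ)+1))| ≤ 16*((m:ℝ)+1)^2 := by
        rw [_root_.abs_of_nonneg (mul_nonneg hd.le (by nlinarith))]
        nlinarith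
      calc |dc m * ((2*(m:ℝ)+2)*(2*(m:ℝ)+1))| * ‖y‖^(2*m)
            ≤ (16*((m:ℝ)+1)^2) * r^m := by
            apply mul_le_mul h2 h1 (by positivity) (by positivity)
        _ = 16*(((m:ℝ)+1)^2 * r^m) := by ring
    )
    (mem_ball_self hr0)
    (by
      apply summable_zero.congr
      intro m
      simp)
    hzr
  exact key

lemma dc_zero : dc 0 = 1 := by unfold dc; norm_num [Nat.factorial]

lemma e_bounds (m : ℕ) :
    |dc m * (2*(m:ℝ)+2)| ≤ 4^1*((m:ℝ)+1)^1 ∧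
    |dc m * ((2*(m:ℝ)+2)*(2*(m:ℝ)+1))| ≤ 4^2*((m:ℝ)+1)^2 ∧
    |dc (m+1) * ((2*((m:ℝ)+1)+2)*(2*((m:ℝ)+1)+1))| ≤ 4^3*((m:ℝ)+1)^3 := by
  have hd := dc_pos m
  have hd1 := dc_le_one m
  have hd' := dc_pos (m+1)
  have hd1' := dc_le_one (m+1)
  have hmn : (0:ℝ) ≤ (m:ℝ) := Nat.cast_nonneg m
  refine ⟨?_, ?_, ?_⟩
  · rw [_root_.abs_of_nonneg (by nlinarith)]; nlinarith
  · rw [_root_.abs_of_nonneg (mul_nonneg hd.le (by nlinarith))]; nlinarith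
  · rw [_root_.abs_of_nonneg (mul_nonneg hd'.le (by nlinarith))]
    nlinarith [sq_nonneg ((m:ℝ)+1), pow_pos (by linarith : (0:ℝ) < (m:ℝ)+1) 3]

lemma ode_S {z : ℂ} (hz : ‖z‖ < 1) : (1 - z^2) * S2 z - z * S1 z = 2 := by
  have h1 : Summable (fun m : ℕ => ((dc m * (2*(m:ℝ)+2) : ℝ) : ℂ) * z^(2*m+2)) :=
    summable_aux hz _ 1 (fun m => (e_bounds m).1) _ (fun m => by omega)
  have h2 : Summable (fun m : ℕ =>
      ((dc m * ((2*(m:ℝ)+2)*(2*(m:ℝ)+1)) : ℝ) : ℂ) * z^(2*m)) :=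
    summable_aux hz _ 2 (fun m => (e_bounds m).2.1) _ (fun m => by omega)
  have h2' : Summable (fun m : ℕ =>
      ((dc m * ((2*(m:ℝ)+2)*(2*(m:ℝ)+1)) : ℝ) : ℂ) * z^(2*m+2)) :=
    summable_aux hz _ 2 (fun m => (e_bounds m).2.1) _ (fun m => by omega)
  have h3 : Summable (fun m : ℕ =>
      ((dc (m+1) * ((2*((m:ℝ)+1)+2)*(2*((m:ℝ)+1)+1)) : ℝ) : ℂ) * z^(2*m+2)) :=
    summable_aux hz _ 3 (fun m => (e_bounds m).2.2) _ (fun m => by omega)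
  have hz2 : z^2 * S2 z = ∑' m : ℕ,
      ((dc m * ((2*(m:ℝ)+2)*(2*(m:ℝ)+1)) : ℝ) : ℂ) * z^(2*m+2) := by
    rw [S2, ← tsum_mul_left]
    exact tsum_congr fun m => by ring
  have hz1 : z * S1 z = ∑' m : ℕ,
      ((dc m * (2*(m:ℝ)+2) : ℝ) : ℂ) * z^(2*m+2) := by
    rw [S1, ← tsum_mul_left]
    exact tsum_congr fun m => by ring
  have hS2 : S2 z = 2 + ∑' m : ℕ,
      ((dc (m+1) * ((2*((m:ℝ)+1)+2)*(2*((m:ℝ)+1)+1)) : ℝ) : ℂ) * z^(2*m+2) := by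
    rw [S2, h2.tsum_eq_zero_add]
    congr 1
    · norm_num [dc_zero]
    · exact tsum_congr fun m => by push_cast; ring_nf
  have key : (1 - z^2) * S2 z - z * S1 z
      = S2 z - (z^2 * S2 z + z * S1 z) := by ring
  rw [key, hz2, hz1, hS2]
  rw [← Summable.tsum_add h2' h1]
  have : ∀ m : ℕ,
      ((dc (m+1) * ((2*((m:ℝ)+1)+2)*(2*((m:ℝ)+1)+1)) : ℝ) : ℂ) * z^(2*m+2)
      - (((dc m * ((2*(m:ℝ)+2)*(2*(m:ℝ)+1)) : ℝ) : ℂ) * z^(2*m+2)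
        + ((dc m * (2*(m:ℝ)+2) : ℝ) : ℂ) * z^(2*m+2)) = 0 := by
    intro m
    have hr : dc (m+1) * ((2*((m:ℝ)+1)+2)*(2*((m:ℝ)+1)+1))
        = dc m * ((2*(m:ℝ)+2)*(2*(m:ℝ)+1)) + dc m * (2*(m:ℝ)+2) := by
      have := dc_rec m
      nlinarith [this]
    rw [hr]
    push_cast
    ring
  have hTS : (∑' m : ℕ,
      ((dc (m+1) * ((2*((m:ℝ)+1)+2)*(2*((m:ℝ)+1)+1)) : ℝ) : ℂ) * z^(2*m+2))
      - (∑' m : ℕ, (((dc m * ((2*(m:ℝ)+2)*(2*(m:ℝ)+1)) : ℝ) : ℂ) * z^(2*m+2)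
        + ((dc m * (2*(m:ℝ)+2) : ℝ) : ℂ) * z^(2*m+2))) = 0 := by
    rw [← Summable.tsum_sub h3 (h2'.add h1), tsum_congr this]
    simp
  linear_combination hTS

lemma const_on_ball {q : ℂ → ℂ} (h : ∀ z ∈ ball (0:ℂ) 1, HasDerivAt q 0 z)
    {z : ℂ} (hz : z ∈ ball (0:ℂ) 1) : q z = q 0 := by
  apply (convex_ball (0:ℂ) 1).is_const_of_fderivWithin_eq_zero (𝕜 := ℂ)
    (fun x hx => ((h x hx).differentiableAt).differentiableWithinAt)
    ?_ hz (mem_ball_self one_pos)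
  intro x hx
  rw [fderivWithin_of_isOpen isOpen_ball hx, (h x hx).hasFDerivAt.fderiv]
  ext y
  simp

lemma S_zero : S 0 = 0 := by
  unfold S
  convert tsum_zero with m
  simp

lemma S1_zero : S1 0 = 0 := by
  unfold S1
  convert tsum_zero with m
  simp

lemma step1 {z : ℂ} (hz : ‖z‖ < 1) : 2 * carcsin z = cs z * S1 z := by
  have h : ∀ y ∈ ball (0:ℂ) 1,
      HasDerivAt (fun y => 2 * carcsin y - cs y * S1 y) 0 y := by
    intro y hy
    rw [mem_ball_zero_iff] at hy
    have hd := ((hasDerivAt_carcsin hy).const_mul 2).sub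
      ((hasDerivAt_cs hy).mul (hasDerivAt_S1 hy))
    refine hd.congr_deriv (Eq.symm ?_)
    have hcs := cs_ne_zero hy
    have hode := ode_S hy
    have hsq := sq_cs y
    have hexp : 2 * (1/cs y) - ((-y/cs y) * S1 y + cs y * S2 y)
        = (2 - ((1 - y^2) * S2 y - y * S1 y)) / cs y := by
      rw [← hsq]
      field_simp
      ring
    rw [hexp, hode]
    simp
  have h0 := const_on_ball h (mem_ball_zero_iff.mpr hz)
  simp only [carcsin_zero, S1_zero, mul_zero, sub_zero] at h0
  linear_combination h0

lemma S_eq {z : ℂ} (hz : ‖z‖ < 1) : S z = carcsin z ^ 2 := by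
  have h : ∀ y ∈ ball (0:ℂ) 1,
      HasDerivAt (fun y => carcsin y ^ 2 - S y) 0 y := by
    intro y hy
    rw [mem_ball_zero_iff] at hy
    have hd := ((hasDerivAt_carcsin hy).pow 2).sub (hasDerivAt_S hy)
    refine hd.congr_deriv (Eq.symm ?_)
    have hcs := cs_ne_zero hy
    have h1 := step1 hy
    field_simp
    linear_combination -h1
  have := const_on_ball h (mem_ball_zero_iff.mpr hz)
  rw [carcsin_zero, S_zero] at this
  simp at this
  linear_combination -this

lemma contOn_S : ContinuousOn S (closedBall (0:ℂ) 1) := by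
  have hU : TendstoUniformlyOn (fun (t : Finset ℕ) (x : ℂ) =>
      ∑ m ∈ t, ((dc m : ℝ) : ℂ) * x^(2*m+2)) S Filter.atTop (closedBall (0:ℂ) 1) := by
    apply tendstoUniformlyOn_tsum dc_summable
    intro n x hx
    rw [mem_closedBall_zero_iff] at hx
    rw [norm_mul, Complex.norm_real, norm_pow]
    rw [Real.norm_eq_abs, _root_.abs_of_nonneg (dc_pos n).le]
    have h1 : ‖x‖^(2*n+2) ≤ 1 := pow_le_one₀ (norm_nonneg x) hx
    nlinarith [dc_pos n]
  apply hU.continuousOn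
  refine Filter.Eventually.frequently ?_
  filter_upwards with t
  apply continuousOn_finset_sum
  intro m _
  exact (continuous_const.mul (continuous_pow _)).continuousOn

lemma contAt_carcsin {z : ℂ} (hz : ‖z‖ ≤ 1) : ContinuousAt carcsin z := by
  have hbase : 0 ≤ (1 - z^2).re ∨ (1 - z^2).im ≠ 0 := by
    left
    have hn : z.re^2 + z.im^2 ≤ 1 := by
      have h : ‖z‖^2 ≤ 1 := by nlinarith [norm_nonneg z]
      rw [Complex.sq_norm, Complex.normSq_apply] at h
      nlinarith
    rw [show (1 - z^2) = 1 - z*z by ring]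
    simp only [Complex.sub_re, Complex.one_re, Complex.mul_re]
    nlinarith
  have hcs : ContinuousAt cs z := by
    have h2 : ContinuousAt (fun y : ℂ => 1 - y^2) z :=
      (continuous_const.sub (continuous_pow 2)).continuousAt
    have hpow : ContinuousAt (fun x : ℂ => x ^ ((1:ℂ)/2)) (1 - z^2) :=
      continuousAt_cpow_const_of_re_pos hbase (by norm_num)
    have hc := ContinuousAt.comp (x := z) hpow h2
    exact hc
  have hcw : ContinuousAt cw z := by
    exact (continuous_const.mul continuous_id).continuousAt.add hcs
  have hlog : ContinuousAt Complex.log (cw z) := continuousAt_clog (cw_mem hz)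
  have : ContinuousAt (fun y => -Complex.I * Complex.log (cw y)) z :=
    (hlog.comp hcw).const_mul _
  exact this

lemma S_eq_closed {z : ℂ} (hz : ‖z‖ ≤ 1) : S z = carcsin z ^ 2 := by
  have heq : EqOn S (fun z => carcsin z ^ 2) (closedBall (0:ℂ) 1) := by
    apply Set.EqOn.of_subset_closure (s := ball (0:ℂ) 1)
      (fun y hy => S_eq (mem_ball_zero_iff.mp hy))
      contOn_S
      (fun y hy => ((contAt_carcsin (mem_closedBall_zero_iff.mp hy)).pow 2).continuousWithinAt)
      ball_subset_closedBall
      (by rw [closure_ball (0:ℂ) one_ne_zero])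
  exact heq (mem_closedBall_zero_iff.mpr hz)

lemma term_eq (v : ℂ) (m : ℕ) :
    ((Nat.factorial (m + 1) : ℂ) ^ 2 * (4 : ℂ) ^ (m + 1) * v ^ (2 * (m + 1))) /
      ((Nat.factorial (2 * (m + 1)) : ℂ) * ((m : ℂ) + 1) ^ 2)
    = 2 * ((dc m : ℝ) : ℂ) * v^(2*m+2) := by
  have key : ((dc m : ℝ) : ℂ) = ((Nat.factorial (m+1) : ℂ))^2 * 4^(m+1) /
      ((Nat.factorial (2*(m+1)) : ℂ) * 2 * ((m:ℂ)+1)^2) := by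
    unfold dc
    push_cast
    ring
  have f2 : ((Nat.factorial (2*(m+1)) : ℂ)) ≠ 0 := Nat.cast_ne_zero.2 (Nat.factorial_ne_zero _)
  have f3 : ((m:ℂ)+1) ≠ 0 := by
    intro h
    have : ((m:ℂ)+1) = ((m+1 : ℕ) : ℂ) := by push_cast; ring
    rw [this] at h
    exact Nat.cast_ne_zero.mpr (Nat.succ_ne_zero m) h
  have hD1 : ((Nat.factorial (2*(m+1)) : ℂ) * ((m:ℂ)+1)^2) ≠ 0 :=
    mul_ne_zero f2 (pow_ne_zero 2 f3)
  have hD2 : ((Nat.factorial (2*(m+1)) : ℂ) * 2 * ((m:ℂ)+1)^2) ≠ 0 :=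
    mul_ne_zero (mul_ne_zero f2 two_ne_zero) (pow_ne_zero 2 f3)
  rw [key, show (2:ℂ) * (((Nat.factorial (m+1) : ℂ))^2 * 4^(m+1) /
      ((Nat.factorial (2*(m+1)) : ℂ) * 2 * ((m:ℂ)+1)^2)) * v^(2*m+2)
    = (2 * ((Nat.factorial (m+1) : ℂ))^2 * 4^(m+1) * v^(2*m+2)) /
      ((Nat.factorial (2*(m+1)) : ℂ) * 2 * ((m:ℂ)+1)^2) from by ring,
    div_eq_div_iff hD1 hD2, show 2*(m+1) = 2*m+2 from by ring]
  ring

theorem arcsin_sq_series (v : ℂ) (hv : ‖v‖ ≤ 1) :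
    Summable (fun m : ℕ =>
      ‖((Nat.factorial (m + 1) : ℂ) ^ 2 * (4 : ℂ) ^ (m + 1) * v ^ (2 * (m + 1))) /
        ((Nat.factorial (2 * (m + 1)) : ℂ) * ((m : ℂ) + 1) ^ 2)‖) ∧
    (1 / 2 : ℂ) * (∑' m : ℕ,
        ((Nat.factorial (m + 1) : ℂ) ^ 2 * (4 : ℂ) ^ (m + 1) * v ^ (2 * (m + 1))) /
          ((Nat.factorial (2 * (m + 1)) : ℂ) * ((m : ℂ) + 1) ^ 2)) = carcsin v ^ 2 := by
  constructor
  · apply Summable.of_norm_bounded (g := fun m => 2 * dc m) (dc_summable.mul_left 2)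
    intro m
    rw [norm_norm, term_eq]
    rw [norm_mul, norm_mul, Complex.norm_real, norm_pow]
    rw [Real.norm_eq_abs, _root_.abs_of_nonneg (dc_pos m).le]
    have h1 : ‖v‖^(2*m+2) ≤ 1 := pow_le_one₀ (norm_nonneg v) hv
    have h2 : ‖(2:ℂ)‖ = 2 := by norm_num
    rw [h2]
    nlinarith [dc_pos m]
  · have h : ∀ m : ℕ,
        ((Nat.factorial (m + 1) : ℂ) ^ 2 * (4 : ℂ) ^ (m + 1) * v ^ (2 * (m + 1))) /
          ((Nat.factorial (2 * (m + 1)) : ℂ) * ((m : ℂ) + 1) ^ 2)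
        = 2 * (((dc m : ℝ) : ℂ) * v^(2*m+2)) := by
      intro m
      rw [term_eq]
      ring
    rw [tsum_congr h, tsum_mul_left, ← S_eq_closed hv, S]
    ring
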